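/- Let q ≠ 0 and r be real numbers. For every nonnegative integer n, B_n^q(r) = ∑_{k=0}^n ∑_{j=0}^k (−1)^k k! W(n,k) W(k,j) c_j^q(r). -/

import Mathlib

/-- The falling factorial `(x)_k = x(x-1)⋯(x-k+1)`. -/
noncomputable def fallFac (x : ℝ) (k : ℕ) : ℝ := ∏ i ∈ Finset.range k, (x - i)

/-- The generalized falling factorial `(x|q)_k = x(x-q)⋯(x-(k-1)q)`. -/
noncomputable def genFallFac (q x : ℝ) (k : ℕ) : ℝ := ∏ i ∈ Finset.range k, (x - i * q)

/-- The Cauchy polynomials with a `q` parameter of the first kind: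
`c_n^q(z) = ∫_0^1 (x − z | q)_n dx`. -/
noncomputable def cauchyFirst (q z : ℝ) (n : ℕ) : ℝ := ∫ x in (0:ℝ)..1, genFallFac q (x - z) n

lemma genFallFac_eq_aux (q : ℝ) (hq : q ≠ 0) (y : ℝ) (j : ℕ) :
    genFallFac q y j = q ^ j * fallFac (y / q) j := by
  unfold genFallFac fallFac
  calc ∏ i ∈ Finset.range j, (y - i * q)
      = ∏ i ∈ Finset.range j, (q * (y / q - i)) := by
        refine Finset.prod_congr rfl fun i _ => ?_
        field_simp
    _ = q ^ j * ∏ i ∈ Finset.range j, (y / q - i) := by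
        rw [Finset.prod_mul_distrib, Finset.prod_const, Finset.card_range]

lemma genFallFac_cont (q r : ℝ) (j : ℕ) :
    Continuous fun x : ℝ => genFallFac q (x - r) j := by
  unfold genFallFac
  exact continuous_finset_prod _ (fun i _ => by continuity)

/-- `B_n^q(r) = ∑_{k=0}^n ∑_{j=0}^k (−1)^k k! W(n,k) W(k,j) c_j^q(r)`. -/
theorem bernoulli_q_eq_double_sum_cauchyFirst (q r : ℝ) (hq : q ≠ 0)
    (W : ℕ → ℕ → ℝ)
    (hW0 : ∀ n k, n < k → W n k = 0)
    (hW : ∀ n : ℕ, ∀ x : ℝ, (q * x + r) ^ n =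
      ∑ k ∈ Finset.range (n + 1), q ^ k * W n k * fallFac x k)
    (B : ℕ → ℝ)
    (hB : ∀ n, B n = ∑ k ∈ Finset.range (n + 1),
      (-1 : ℝ) ^ k * ((k.factorial : ℝ) / ((k : ℝ) + 1)) * W n k)
    (n : ℕ) :
    B n = ∑ k ∈ Finset.range (n + 1), ∑ j ∈ Finset.range (k + 1),
      (-1 : ℝ) ^ k * (k.factorial : ℝ) * W n k * W k j * cauchyFirst q r j := by
  -- key identity: ∑_{j≤k} W k j * c_j^q(r) = 1/(k+1)
  have key : ∀ k : ℕ, ∑ j ∈ Finset.range (k + 1), W k j * cauchyFirst q r j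
      = 1 / ((k : ℝ) + 1) := by
    intro k
    have hsum : ∀ x : ℝ, ∑ j ∈ Finset.range (k + 1), W k j * genFallFac q (x - r) j
        = x ^ k := by
      intro x
      have h1 := hW k ((x - r) / q)
      have h2 : q * ((x - r) / q) + r = x := by field_simp; ring
      rw [h2] at h1
      rw [h1]
      refine Finset.sum_congr rfl fun j _ => ?_
      rw [genFallFac_eq_aux q hq]
      ring
    have hint : ∀ j : ℕ, IntervalIntegrable
        (fun x : ℝ => W k j * genFallFac q (x - r) j) MeasureTheory.volume 0 1 :=
      fun j => (continuous_const.mul (genFallFac_cont q r j)).intervalIntegrable 0 1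
    calc ∑ j ∈ Finset.range (k + 1), W k j * cauchyFirst q r j
        = ∑ j ∈ Finset.range (k + 1), ∫ x in (0:ℝ)..1, W k j * genFallFac q (x - r) j := by
          refine Finset.sum_congr rfl fun j _ => ?_
          rw [cauchyFirst, intervalIntegral.integral_const_mul]
      _ = ∫ x in (0:ℝ)..1, ∑ j ∈ Finset.range (k + 1), W k j * genFallFac q (x - r) j := by
          exact (intervalIntegral.integral_finset_sum (fun j _ => hint j)).symm
      _ = ∫ x in (0:ℝ)..1, x ^ k := by
          refine intervalIntegral.integral_congr fun x _ => hsum x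
      _ = 1 / ((k : ℝ) + 1) := by
          rw [integral_pow]
          simp
  rw [hB n]
  refine Finset.sum_congr rfl fun k _ => ?_
  have : ∑ j ∈ Finset.range (k + 1),
      (-1 : ℝ) ^ k * (k.factorial : ℝ) * W n k * W k j * cauchyFirst q r j
      = (-1 : ℝ) ^ k * (k.factorial : ℝ) * W n k
        * ∑ j ∈ Finset.range (k + 1), W k j * cauchyFirst q r j := by
    rw [Finset.mul_sum]
    exact Finset.sum_congr rfl fun j _ => by ring
  rw [this, key k]
  have hk : ((k : ℝ) + 1) ≠ 0 := by positivity
  field_simp
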